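/- Let X ⊆ ℝⁿ and Y ⊆ ℝⁿ be germs at 0 admitting a bi-α-Hölder homeomorphism h : (X,0) → (Y,0) with α ∈ (0,1]. Then there exists a bi-α²-Hölder homeomorphism Φ : (ℝ²ⁿ,0) → (ℝ²ⁿ,0) such that Φ(X × {0}) = {0} × Y and Φ(x,0) = (0, h(x)) for all x ∈ X near 0. -/

import Mathlib

open Metric Set

open Filter
open scoped NNReal

/-- Subadditivity of rpow with exponent in (0,1]. -/
lemma stmt10_rpow_add_le {a b p : ℝ} (ha : 0 ≤ a) (hb : 0 ≤ b) (hp : 0 ≤ p) (hp1 : p ≤ 1) :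
    (a + b) ^ p ≤ a ^ p + b ^ p := by
  have := NNReal.rpow_add_le_add_rpow a.toNNReal b.toNNReal hp hp1
  have h2 : ((a.toNNReal + b.toNNReal : ℝ≥0) : ℝ) ^ p ≤
      ((a.toNNReal : ℝ)) ^ p + ((b.toNNReal : ℝ)) ^ p := by
    calc ((a.toNNReal + b.toNNReal : ℝ≥0) : ℝ) ^ p
        = (((a.toNNReal + b.toNNReal) ^ p : ℝ≥0) : ℝ) := by
          rw [NNReal.coe_rpow]
      _ ≤ ((a.toNNReal ^ p + b.toNNReal ^ p : ℝ≥0) : ℝ) := by exact_mod_cast this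
      _ = ((a.toNNReal : ℝ)) ^ p + ((b.toNNReal : ℝ)) ^ p := by
          push_cast [NNReal.coe_rpow]; ring
  simpa [Real.coe_toNNReal a ha, Real.coe_toNNReal b hb] using h2

/-- Triangle-type inequality for rpow of norms. -/
lemma stmt10_norm_rpow_tri {E : Type*} [NormedAddCommGroup E] (x y u : E) {p : ℝ}
    (hp : 0 ≤ p) (hp1 : p ≤ 1) : ‖x - y‖ ^ p ≤ ‖x - u‖ ^ p + ‖u - y‖ ^ p := by
  calc ‖x - y‖ ^ p ≤ (‖x - u‖ + ‖u - y‖) ^ p := by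
        apply Real.rpow_le_rpow (norm_nonneg _) _ hp
        simpa using norm_sub_le_norm_sub_add_norm_sub x u y
    _ ≤ ‖x - u‖ ^ p + ‖u - y‖ ^ p :=
        stmt10_rpow_add_le (norm_nonneg _) (norm_nonneg _) hp hp1

section Ext
variable {E : Type*} [NormedAddCommGroup E]

/-- McShane extension of an α-Hölder function. -/
noncomputable def stmt10_ext (C a : ℝ) (X : Set E) (f : E → ℝ) (u : E) : ℝ :=
  sInf ((fun x => f x + C * ‖u - x‖ ^ a) '' X)

variable {C a : ℝ} {X : Set E} {f : E → ℝ} {x₀ : E}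
variable (hx₀ : x₀ ∈ X) (hC : 0 ≤ C) (ha : 0 < a) (ha1 : a ≤ 1)
variable (hf : ∀ x ∈ X, ∀ y ∈ X, |f x - f y| ≤ C * ‖x - y‖ ^ a)

include hx₀ hC ha ha1 hf

lemma stmt10_key (u : E) {y : E} (hy : y ∈ X) {x : E} (hx : x ∈ X) :
    f y - C * ‖u - y‖ ^ a ≤ f x + C * ‖u - x‖ ^ a := by
  have h1 : f y - f x ≤ C * ‖y - x‖ ^ a := le_trans (le_abs_self _) (hf y hy x hx)
  have h2 : ‖y - x‖ ^ a ≤ ‖y - u‖ ^ a + ‖u - x‖ ^ a :=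
    stmt10_norm_rpow_tri y x u ha.le ha1
  have h3 : C * ‖y - x‖ ^ a ≤ C * (‖y - u‖ ^ a + ‖u - x‖ ^ a) :=
    mul_le_mul_of_nonneg_left h2 hC
  have h4 : ‖y - u‖ = ‖u - y‖ := norm_sub_rev _ _
  rw [h4] at h3
  nlinarith [h3, h1]

lemma stmt10_ext_bddBelow (u : E) :
    BddBelow ((fun x => f x + C * ‖u - x‖ ^ a) '' X) := by
  refine ⟨f x₀ - C * ‖u - x₀‖ ^ a, ?_⟩
  rintro _ ⟨x, hx, rfl⟩
  exact stmt10_key hx₀ hC ha ha1 hf u hx₀ hx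

lemma stmt10_ext_le (u : E) {x : E} (hx : x ∈ X) :
    stmt10_ext C a X f u ≤ f x + C * ‖u - x‖ ^ a :=
  csInf_le (stmt10_ext_bddBelow hx₀ hC ha ha1 hf u) ⟨x, hx, rfl⟩

lemma stmt10_le_ext (u : E) {b : ℝ} (hb : ∀ x ∈ X, b ≤ f x + C * ‖u - x‖ ^ a) :
    b ≤ stmt10_ext C a X f u :=
  le_csInf ⟨_, ⟨x₀, hx₀, rfl⟩⟩ (by rintro _ ⟨x, hx, rfl⟩; exact hb x hx)

lemma stmt10_ext_eq {u : E} (hu : u ∈ X) : stmt10_ext C a X f u = f u := by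
  refine le_antisymm ?_ ?_
  · have := stmt10_ext_le hx₀ hC ha ha1 hf u hu
    simpa [Real.zero_rpow ha.ne'] using this
  · refine stmt10_le_ext hx₀ hC ha ha1 hf u (fun x hx => ?_)
    have h1 : f u - f x ≤ C * ‖u - x‖ ^ a := le_trans (le_abs_self _) (hf u hu x hx)
    linarith

lemma stmt10_ext_holder (u v : E) :
    |stmt10_ext C a X f u - stmt10_ext C a X f v| ≤ C * ‖u - v‖ ^ a := by
  have main : ∀ u' v' : E,
      stmt10_ext C a X f u' - stmt10_ext C a X f v' ≤ C * ‖u' - v'‖ ^ a := by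
    intro u' v'
    have h1 : stmt10_ext C a X f u' - C * ‖u' - v'‖ ^ a ≤ stmt10_ext C a X f v' := by
      refine stmt10_le_ext hx₀ hC ha ha1 hf v' (fun x hx => ?_)
      have h2 : stmt10_ext C a X f u' ≤ f x + C * ‖u' - x‖ ^ a :=
        stmt10_ext_le hx₀ hC ha ha1 hf u' hx
      have h3 : ‖u' - x‖ ^ a ≤ ‖u' - v'‖ ^ a + ‖v' - x‖ ^ a :=
        stmt10_norm_rpow_tri u' x v' ha.le ha1
      nlinarith [mul_le_mul_of_nonneg_left h3 hC]
    linarith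
  rw [abs_sub_le_iff]
  exact ⟨main u v, by rw [norm_sub_rev]; exact main v u⟩

end Ext

section VExt
variable {n : ℕ}

lemma stmt10_coord_le (x : EuclideanSpace ℝ (Fin n)) (i : Fin n) : |x i| ≤ ‖x‖ := by
  have := EuclideanSpace.norm_eq x
  rw [this]
  have h1 : |x i| = Real.sqrt (|x i| ^ 2) := (Real.sqrt_sq (abs_nonneg _)).symm
  rw [h1]
  apply Real.sqrt_le_sqrt
  calc |x i| ^ 2 = ‖x i‖ ^ 2 := by rw [Real.norm_eq_abs]
    _ ≤ ∑ j, ‖x j‖ ^ 2 :=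
      Finset.single_le_sum (f := fun j => ‖x j‖ ^ 2) (fun j _ => sq_nonneg _) (Finset.mem_univ i)

/-- Coordinatewise McShane extension of a vector-valued Hölder map. -/
noncomputable def stmt10_extV (C a : ℝ) (X : Set (EuclideanSpace ℝ (Fin n)))
    (F : EuclideanSpace ℝ (Fin n) → EuclideanSpace ℝ (Fin n))
    (u : EuclideanSpace ℝ (Fin n)) : EuclideanSpace ℝ (Fin n) :=
  WithLp.toLp 2 (fun i => stmt10_ext C a X (fun x => F x i) u)

variable {C a : ℝ} {X : Set (EuclideanSpace ℝ (Fin n))}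
  {F : EuclideanSpace ℝ (Fin n) → EuclideanSpace ℝ (Fin n)} {x₀ : EuclideanSpace ℝ (Fin n)}
  (hx₀ : x₀ ∈ X) (hC : 0 ≤ C) (ha : 0 < a) (ha1 : a ≤ 1)
  (hF : ∀ x ∈ X, ∀ y ∈ X, ‖F x - F y‖ ≤ C * ‖x - y‖ ^ a)

include hx₀ hC ha ha1 hF

lemma stmt10_coordHolder (i : Fin n) :
    ∀ x ∈ X, ∀ y ∈ X, |F x i - F y i| ≤ C * ‖x - y‖ ^ a := by
  intro x hx y hy
  have h1 : |(F x - F y) i| ≤ ‖F x - F y‖ := stmt10_coord_le _ i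
  have h2 : (F x - F y) i = F x i - F y i := rfl
  rw [h2] at h1
  exact h1.trans (hF x hx y hy)

lemma stmt10_extV_eq {u : EuclideanSpace ℝ (Fin n)} (hu : u ∈ X) :
    stmt10_extV C a X F u = F u := by
  ext i
  exact stmt10_ext_eq hx₀ hC ha ha1 (stmt10_coordHolder hx₀ hC ha ha1 hF i) hu

lemma stmt10_extV_holder (u v : EuclideanSpace ℝ (Fin n)) :
    ‖stmt10_extV C a X F u - stmt10_extV C a X F v‖ ≤
      (Real.sqrt n * C) * ‖u - v‖ ^ a := by
  set B := C * ‖u - v‖ ^ a with hB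
  have hBnn : 0 ≤ B := mul_nonneg hC (Real.rpow_nonneg (norm_nonneg _) _)
  rw [EuclideanSpace.norm_eq]
  have hcoord : ∀ i : Fin n, ‖(stmt10_extV C a X F u - stmt10_extV C a X F v) i‖ ^ 2 ≤ B ^ 2 := by
    intro i
    have h1 : (stmt10_extV C a X F u - stmt10_extV C a X F v) i =
        stmt10_ext C a X (fun x => F x i) u - stmt10_ext C a X (fun x => F x i) v := rfl
    rw [h1, Real.norm_eq_abs]
    have h2 := stmt10_ext_holder hx₀ hC ha ha1 (stmt10_coordHolder hx₀ hC ha ha1 hF i) u v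
    rw [← hB] at h2
    exact pow_le_pow_left₀ (abs_nonneg _) h2 2
  calc Real.sqrt (∑ i, ‖(stmt10_extV C a X F u - stmt10_extV C a X F v) i‖ ^ 2)
      ≤ Real.sqrt (∑ _i : Fin n, B ^ 2) :=
        Real.sqrt_le_sqrt (Finset.sum_le_sum (fun i _ => hcoord i))
    _ = Real.sqrt ((n : ℝ) * B ^ 2) := by
        rw [Finset.sum_const, Finset.card_univ, Fintype.card_fin, nsmul_eq_mul]
    _ = Real.sqrt n * B := by
        rw [Real.sqrt_mul (Nat.cast_nonneg n), Real.sqrt_sq hBnn]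
    _ = (Real.sqrt n * C) * ‖u - v‖ ^ a := by rw [hB]; ring

end VExt

lemma stmt10_cont {E F : Type*} [NormedAddCommGroup E] [NormedAddCommGroup F]
    {f : E → F} {C a : ℝ} (ha : 0 < a)
    (hf : ∀ u v, ‖f u - f v‖ ≤ C * ‖u - v‖ ^ a) : Continuous f := by
  rw [continuous_iff_continuousAt]
  intro u
  rw [ContinuousAt, tendsto_iff_norm_sub_tendsto_zero]
  have hb : Tendsto (fun v => C * ‖v - u‖ ^ a) (nhds u) (nhds 0) := by
    have h1 : Tendsto (fun v : E => ‖v - u‖) (nhds u) (nhds 0) := by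
      have : Continuous (fun v : E => ‖v - u‖) := (continuous_id.sub continuous_const).norm
      simpa using this.tendsto u
    have h2 : Tendsto (fun t : ℝ => C * t ^ a) (nhds 0) (nhds (C * 0 ^ a)) :=
      continuousAt_const.mul (Real.continuousAt_rpow_const 0 a (Or.inr ha.le))
    rw [Real.zero_rpow ha.ne', mul_zero] at h2
    exact h2.comp h1
  exact squeeze_zero (fun v => norm_nonneg _) (fun v => hf v u) hb

/-- Arithmetic: bounding combinations by the α² power. -/
lemma stmt10_arith {α K D : ℝ} (hα : 0 < α) (hα1 : α ≤ 1) (hK : 1 ≤ K)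
    (hD : 0 ≤ D) (hD1 : D ≤ 1) :
    D + K * D ^ α ≤ 2 * K * D ^ (α ^ 2) ∧
      D + K * (D + K * D ^ α) ^ α ≤ 3 * K ^ 2 * D ^ (α ^ 2) := by
  have hα2 : 0 < α ^ 2 := by positivity
  have hα21 : α ^ 2 ≤ α := by nlinarith
  have hK0 : (0 : ℝ) ≤ K := by linarith
  have mono : ∀ b c : ℝ, 0 < c → c ≤ b → D ^ b ≤ D ^ c := by
    intro b c hc hcb
    rcases eq_or_lt_of_le hD with h0 | h0
    · have hb : 0 < b := lt_of_lt_of_le hc hcb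
      rw [← h0, Real.zero_rpow hb.ne', Real.zero_rpow hc.ne']
    · exact Real.rpow_le_rpow_of_exponent_ge h0 hD1 hcb
  have e1 : D ≤ D ^ α := by
    have := mono 1 α hα hα1
    simpa using this
  have e2 : D ^ α ≤ D ^ (α ^ 2) := mono α (α ^ 2) hα2 hα21
  have e3 : D ≤ D ^ (α ^ 2) := e1.trans e2
  have hDα : 0 ≤ D ^ α := Real.rpow_nonneg hD _
  have hDα2 : 0 ≤ D ^ (α ^ 2) := Real.rpow_nonneg hD _
  constructor
  · nlinarith
  · have inner : D + K * D ^ α ≤ 2 * K * D ^ α := by nlinarith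
    have h4 : (D + K * D ^ α) ^ α ≤ (2 * K * D ^ α) ^ α :=
      Real.rpow_le_rpow (by positivity) inner hα.le
    have h5 : (2 * K * D ^ α) ^ α = (2 * K) ^ α * D ^ (α ^ 2) := by
      rw [Real.mul_rpow (by positivity) hDα, ← Real.rpow_mul hD, sq]
    have h6 : (2 * K) ^ α ≤ 2 * K := by
      calc (2 * K) ^ α ≤ (2 * K) ^ (1 : ℝ) :=
        Real.rpow_le_rpow_of_exponent_le (by linarith) hα1
        _ = 2 * K := Real.rpow_one _
    have h7 : (D + K * D ^ α) ^ α ≤ 2 * K * D ^ (α ^ 2) := by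
      rw [h5] at h4
      calc (D + K * D ^ α) ^ α ≤ (2 * K) ^ α * D ^ (α ^ 2) := h4
        _ ≤ 2 * K * D ^ (α ^ 2) := mul_le_mul_of_nonneg_right h6 hDα2
    nlinarith

section Fmap
variable {E : Type*} [NormedAddCommGroup E]

/-- The shear-type map used to build the ambient homeomorphism. -/
def stmt10_F (A B : E → E) (p : E × E) : E × E :=
  (p.1 - B (p.2 + A p.1), p.2 + A p.1)

lemma stmt10_F_upper (A B : E → E) {K α : ℝ} (hK : 1 ≤ K) (hα : 0 < α) (hα1 : α ≤ 1)
    (HA : ∀ u v, ‖A u - A v‖ ≤ K * ‖u - v‖ ^ α)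
    (HB : ∀ u v, ‖B u - B v‖ ≤ K * ‖u - v‖ ^ α)
    (p q : E × E) (hpq : ‖p - q‖ ≤ 1) :
    ‖stmt10_F A B p - stmt10_F A B q‖ ≤ 3 * K ^ 2 * ‖p - q‖ ^ (α ^ 2) := by
  set D := ‖p - q‖ with hD
  have hD0 : 0 ≤ D := norm_nonneg _
  have h1 : ‖p.1 - q.1‖ ≤ D := norm_fst_le (p - q)
  have h2 : ‖p.2 - q.2‖ ≤ D := norm_snd_le (p - q)
  have hrm : ‖p.1 - q.1‖ ^ α ≤ D ^ α := Real.rpow_le_rpow (norm_nonneg _) h1 hα.le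
  have hK0 : (0 : ℝ) ≤ K := by linarith
  have hs : ‖(p.2 + A p.1) - (q.2 + A q.1)‖ ≤ D + K * D ^ α := by
    calc ‖(p.2 + A p.1) - (q.2 + A q.1)‖ = ‖(p.2 - q.2) + (A p.1 - A q.1)‖ := by
          rw [add_sub_add_comm]
      _ ≤ ‖p.2 - q.2‖ + ‖A p.1 - A q.1‖ := norm_add_le _ _
      _ ≤ D + K * ‖p.1 - q.1‖ ^ α := add_le_add h2 (HA _ _)
      _ ≤ D + K * D ^ α := by nlinarith
  obtain ⟨e1, e2⟩ := stmt10_arith hα hα1 hK hD0 hpq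
  have hsecond : ‖(stmt10_F A B p - stmt10_F A B q).2‖ ≤ 3 * K ^ 2 * D ^ (α ^ 2) := by
    have : (stmt10_F A B p - stmt10_F A B q).2 = (p.2 + A p.1) - (q.2 + A q.1) := rfl
    rw [this]
    have hDα2 : 0 ≤ D ^ (α ^ 2) := Real.rpow_nonneg hD0 _
    have hKsq : 2 * K ≤ 3 * K ^ 2 := by nlinarith
    calc ‖(p.2 + A p.1) - (q.2 + A q.1)‖ ≤ D + K * D ^ α := hs
      _ ≤ 2 * K * D ^ (α ^ 2) := e1
      _ ≤ 3 * K ^ 2 * D ^ (α ^ 2) := mul_le_mul_of_nonneg_right hKsq hDα2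
  have hfirst : ‖(stmt10_F A B p - stmt10_F A B q).1‖ ≤ 3 * K ^ 2 * D ^ (α ^ 2) := by
    have heq : (stmt10_F A B p - stmt10_F A B q).1 =
        (p.1 - q.1) - (B (p.2 + A p.1) - B (q.2 + A q.1)) := by
      show (p.1 - B (p.2 + A p.1)) - (q.1 - B (q.2 + A q.1)) = _
      abel
    rw [heq]
    have hB : ‖B (p.2 + A p.1) - B (q.2 + A q.1)‖ ≤ K * (D + K * D ^ α) ^ α := by
      calc ‖B (p.2 + A p.1) - B (q.2 + A q.1)‖
          ≤ K * ‖(p.2 + A p.1) - (q.2 + A q.1)‖ ^ α := HB _ _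
        _ ≤ K * (D + K * D ^ α) ^ α := by
            apply mul_le_mul_of_nonneg_left _ hK0
            exact Real.rpow_le_rpow (norm_nonneg _) hs hα.le
    calc ‖(p.1 - q.1) - (B (p.2 + A p.1) - B (q.2 + A q.1))‖
        ≤ ‖p.1 - q.1‖ + ‖B (p.2 + A p.1) - B (q.2 + A q.1)‖ := norm_sub_le _ _
      _ ≤ D + K * (D + K * D ^ α) ^ α := add_le_add h1 hB
      _ ≤ 3 * K ^ 2 * D ^ (α ^ 2) := e2
  rw [Prod.norm_def]
  exact max_le hfirst hsecond

end Fmap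


/-- a bi-α-Hölder homeomorphism between germs (X,0), (Y,0) in ℝⁿ extends
to a bi-α²-Hölder homeomorphism Φ of (ℝ²ⁿ,0) with Φ(X × {0}) = {0} × Y and
Φ(x,0) = (0, h(x)) near 0. -/
theorem stmt_10 (n : ℕ)
    (X Y : Set (EuclideanSpace ℝ (Fin n)))
    (h g : EuclideanSpace ℝ (Fin n) → EuclideanSpace ℝ (Fin n))
    (h0X : (0 : EuclideanSpace ℝ (Fin n)) ∈ X)
    (h0Y : (0 : EuclideanSpace ℝ (Fin n)) ∈ Y)
    (hh0 : h 0 = 0)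
    (hmaps : ∀ x ∈ X, h x ∈ Y) (hgmaps : ∀ y ∈ Y, g y ∈ X)
    (hgh : ∀ x ∈ X, g (h x) = x) (hhg : ∀ y ∈ Y, h (g y) = y)
    (α L : ℝ) (hα : 0 < α) (hα1 : α ≤ 1) (hL : 1 ≤ L)
    (hHolder : ∀ x₁ ∈ X, ∀ x₂ ∈ X,
      (1 / L) * ‖x₁ - x₂‖ ^ (1 / α) ≤ ‖h x₁ - h x₂‖ ∧
      ‖h x₁ - h x₂‖ ≤ L * ‖x₁ - x₂‖ ^ α) :
    ∃ Φ Ψ : EuclideanSpace ℝ (Fin n) × EuclideanSpace ℝ (Fin n) →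
        EuclideanSpace ℝ (Fin n) × EuclideanSpace ℝ (Fin n),
      (∀ p, Ψ (Φ p) = p) ∧ (∀ p, Φ (Ψ p) = p) ∧ Φ 0 = 0 ∧
      Continuous Φ ∧ Continuous Ψ ∧
      (∃ L' : ℝ, 1 ≤ L' ∧ ∃ ε : ℝ, 0 < ε ∧
        ∀ p ∈ ball (0 : EuclideanSpace ℝ (Fin n) × EuclideanSpace ℝ (Fin n)) ε,
        ∀ q ∈ ball (0 : EuclideanSpace ℝ (Fin n) × EuclideanSpace ℝ (Fin n)) ε,
          (1 / L') * ‖p - q‖ ^ (1 / α ^ 2) ≤ ‖Φ p - Φ q‖ ∧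
          ‖Φ p - Φ q‖ ≤ L' * ‖p - q‖ ^ (α ^ 2)) ∧
      (∀ x ∈ X, Φ (x, 0) = (0, h x)) ∧
      Φ '' (X ×ˢ ({0} : Set (EuclideanSpace ℝ (Fin n)))) =
        ({0} : Set (EuclideanSpace ℝ (Fin n))) ×ˢ Y := by
  have hL0 : (0 : ℝ) ≤ L := by linarith
  -- Hölder bounds for h on X and g on Y
  have hup : ∀ x ∈ X, ∀ y ∈ X, ‖h x - h y‖ ≤ L * ‖x - y‖ ^ α :=
    fun x hx y hy => (hHolder x hx y hy).2
  have gup : ∀ y₁ ∈ Y, ∀ y₂ ∈ Y, ‖g y₁ - g y₂‖ ≤ L * ‖y₁ - y₂‖ ^ α := by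
    intro y₁ hy₁ y₂ hy₂
    have hx₁ : g y₁ ∈ X := hgmaps y₁ hy₁
    have hx₂ : g y₂ ∈ X := hgmaps y₂ hy₂
    have hlow := (hHolder (g y₁) hx₁ (g y₂) hx₂).1
    rw [hhg y₁ hy₁, hhg y₂ hy₂] at hlow
    set t := ‖g y₁ - g y₂‖ with ht
    have ht0 : 0 ≤ t := norm_nonneg _
    have h1 : t ^ (1 / α) ≤ L * ‖y₁ - y₂‖ := by
      have hLpos : 0 < L := by linarith
      rw [div_mul_eq_mul_div, one_mul, div_le_iff₀ hLpos] at hlow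
      calc t ^ (1 / α) ≤ ‖y₁ - y₂‖ * L := hlow
        _ = L * ‖y₁ - y₂‖ := mul_comm _ _
    have h2 : (t ^ (1 / α)) ^ α ≤ (L * ‖y₁ - y₂‖) ^ α :=
      Real.rpow_le_rpow (Real.rpow_nonneg ht0 _) h1 hα.le
    have h3 : (t ^ (1 / α)) ^ α = t := by
      rw [← Real.rpow_mul ht0, one_div, inv_mul_cancel₀ hα.ne', Real.rpow_one]
    have h4 : (L * ‖y₁ - y₂‖) ^ α = L ^ α * ‖y₁ - y₂‖ ^ α :=
      Real.mul_rpow hL0 (norm_nonneg _)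
    have h5 : L ^ α ≤ L := by
      calc L ^ α ≤ L ^ (1 : ℝ) := Real.rpow_le_rpow_of_exponent_le hL hα1
        _ = L := Real.rpow_one _
    rw [h3, h4] at h2
    calc t ≤ L ^ α * ‖y₁ - y₂‖ ^ α := h2
      _ ≤ L * ‖y₁ - y₂‖ ^ α :=
        mul_le_mul_of_nonneg_right h5 (Real.rpow_nonneg (norm_nonneg _) _)
  -- extensions
  set K : ℝ := Real.sqrt n * L + 1 with hKdef
  have hsn : 0 ≤ Real.sqrt n * L := mul_nonneg (Real.sqrt_nonneg _) hL0
  have hK1 : 1 ≤ K := by simp [hKdef]; linarith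
  have hK0 : 0 ≤ K := by linarith
  set ht : EuclideanSpace ℝ (Fin n) → EuclideanSpace ℝ (Fin n) := stmt10_extV L α X h with hhtdef
  set kt : EuclideanSpace ℝ (Fin n) → EuclideanSpace ℝ (Fin n) := stmt10_extV L α Y g with hktdef
  have Hh : ∀ u v : EuclideanSpace ℝ (Fin n), ‖ht u - ht v‖ ≤ K * ‖u - v‖ ^ α := by
    intro u v
    calc ‖ht u - ht v‖ ≤ (Real.sqrt n * L) * ‖u - v‖ ^ α :=
        stmt10_extV_holder h0X hL0 hα hα1 hup u v
      _ ≤ K * ‖u - v‖ ^ α := by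
        apply mul_le_mul_of_nonneg_right _ (Real.rpow_nonneg (norm_nonneg _) _)
        linarith
  have Hk : ∀ u v : EuclideanSpace ℝ (Fin n), ‖kt u - kt v‖ ≤ K * ‖u - v‖ ^ α := by
    intro u v
    calc ‖kt u - kt v‖ ≤ (Real.sqrt n * L) * ‖u - v‖ ^ α :=
        stmt10_extV_holder h0Y hL0 hα hα1 gup u v
      _ ≤ K * ‖u - v‖ ^ α := by
        apply mul_le_mul_of_nonneg_right _ (Real.rpow_nonneg (norm_nonneg _) _)
        linarith
  have hteq : ∀ x ∈ X, ht x = h x := fun x hx => stmt10_extV_eq h0X hL0 hα hα1 hup hx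
  have kteq : ∀ y ∈ Y, kt y = g y := fun y hy => stmt10_extV_eq h0Y hL0 hα hα1 gup hy
  -- the maps
  set Φ : EuclideanSpace ℝ (Fin n) × EuclideanSpace ℝ (Fin n) → EuclideanSpace ℝ (Fin n) × EuclideanSpace ℝ (Fin n) := stmt10_F ht kt with hΦdef
  set Ψ : EuclideanSpace ℝ (Fin n) × EuclideanSpace ℝ (Fin n) → EuclideanSpace ℝ (Fin n) × EuclideanSpace ℝ (Fin n) := fun p =>
    ((stmt10_F kt ht (p.2, p.1)).2, (stmt10_F kt ht (p.2, p.1)).1) with hΨdef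
  -- Φ on X × {0}
  have hΦX : ∀ x ∈ X, Φ (x, (0 : EuclideanSpace ℝ (Fin n))) = ((0 : EuclideanSpace ℝ (Fin n)), h x) := by
    intro x hx
    show ((x : EuclideanSpace ℝ (Fin n)) - kt ((0 : EuclideanSpace ℝ (Fin n)) + ht x), (0 : EuclideanSpace ℝ (Fin n)) + ht x) = ((0 : EuclideanSpace ℝ (Fin n)), h x)
    rw [hteq x hx, zero_add, kteq (h x) (hmaps x hx), hgh x hx, sub_self]
  have hΦ0 : Φ 0 = 0 := by
    have := hΦX 0 h0X
    rw [hh0] at this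
    exact this
  -- inverses
  have hΨΦ : ∀ p, Ψ (Φ p) = p := by
    intro p
    show ((stmt10_F kt ht ((Φ p).2, (Φ p).1)).2, (stmt10_F kt ht ((Φ p).2, (Φ p).1)).1) = p
    have h1 : (Φ p).1 = p.1 - kt (p.2 + ht p.1) := rfl
    have h2 : (Φ p).2 = p.2 + ht p.1 := rfl
    rw [h1, h2]
    show ((p.1 - kt (p.2 + ht p.1)) + kt (p.2 + ht p.1),
      (p.2 + ht p.1) - ht ((p.1 - kt (p.2 + ht p.1)) + kt (p.2 + ht p.1))) = p
    rw [sub_add_cancel, add_sub_cancel_right]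
  have hΦΨ : ∀ p, Φ (Ψ p) = p := by
    intro p
    have h1 : (Ψ p).1 = p.1 + kt p.2 := by
      show (stmt10_F kt ht (p.2, p.1)).2 = _
      show p.1 + kt p.2 = _
      rfl
    have h2 : (Ψ p).2 = p.2 - ht (p.1 + kt p.2) := by
      show (stmt10_F kt ht (p.2, p.1)).1 = _
      show p.2 - ht (p.1 + kt p.2) = _
      rfl
    show ((Ψ p).1 - kt ((Ψ p).2 + ht (Ψ p).1), (Ψ p).2 + ht (Ψ p).1) = p
    rw [h1, h2, sub_add_cancel, add_sub_cancel_right]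
  -- continuity
  have cht : Continuous ht := stmt10_cont hα Hh
  have ckt : Continuous kt := stmt10_cont hα Hk
  have cΦ : Continuous Φ := by
    have c1 : Continuous fun p : EuclideanSpace ℝ (Fin n) × EuclideanSpace ℝ (Fin n) => p.2 + ht p.1 :=
      continuous_snd.add (cht.comp continuous_fst)
    exact (continuous_fst.sub (ckt.comp c1)).prodMk c1
  have cΨ : Continuous Ψ := by
    have cswap : Continuous fun p : EuclideanSpace ℝ (Fin n) × EuclideanSpace ℝ (Fin n) => stmt10_F kt ht (p.2, p.1) := by
      have c1 : Continuous fun p : EuclideanSpace ℝ (Fin n) × EuclideanSpace ℝ (Fin n) => p.1 + kt p.2 :=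
        continuous_fst.add (ckt.comp continuous_snd)
      exact (continuous_snd.sub (cht.comp c1)).prodMk c1
    exact (continuous_snd.comp cswap).prodMk (continuous_fst.comp cswap)
  -- Hölder bounds for Φ and Ψ
  set M : ℝ := 3 * K ^ 2 with hMdef
  have hM1 : 1 ≤ M := by nlinarith
  have hM0 : 0 < M := by linarith
  have hΦup : ∀ p q : EuclideanSpace ℝ (Fin n) × EuclideanSpace ℝ (Fin n), ‖p - q‖ ≤ 1 → ‖Φ p - Φ q‖ ≤ M * ‖p - q‖ ^ (α ^ 2) :=
    fun p q hpq => stmt10_F_upper ht kt hK1 hα hα1 Hh Hk p q hpq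
  have hΨnorm : ∀ a b : EuclideanSpace ℝ (Fin n) × EuclideanSpace ℝ (Fin n), ‖Ψ a - Ψ b‖ = ‖stmt10_F kt ht (a.2, a.1) - stmt10_F kt ht (b.2, b.1)‖ := by
    intro a b
    rw [Prod.norm_def, Prod.norm_def, max_comm]
    rfl
  have hswapnorm : ∀ a b : EuclideanSpace ℝ (Fin n) × EuclideanSpace ℝ (Fin n), ‖((a.2, a.1) : EuclideanSpace ℝ (Fin n) × EuclideanSpace ℝ (Fin n)) - (b.2, b.1)‖ = ‖a - b‖ := by
    intro a b
    rw [Prod.norm_def, Prod.norm_def, max_comm]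
    rfl
  have hΨup : ∀ p q : EuclideanSpace ℝ (Fin n) × EuclideanSpace ℝ (Fin n), ‖p - q‖ ≤ 1 → ‖Ψ p - Ψ q‖ ≤ M * ‖p - q‖ ^ (α ^ 2) := by
    intro p q hpq
    rw [hΨnorm p q]
    have := stmt10_F_upper kt ht hK1 hα hα1 Hk Hh (p.2, p.1) (q.2, q.1)
      (by rw [hswapnorm]; exact hpq)
    rwa [hswapnorm] at this
  -- constants
  have hα2 : (0 : ℝ) < α ^ 2 := by positivity
  set s : ℝ := 1 / α ^ 2 with hsdef
  have hs0 : 0 < s := by positivity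
  have hs1 : 1 ≤ s := by
    rw [hsdef, le_div_iff₀ hα2]
    nlinarith
  set L' : ℝ := M ^ s with hL'def
  have hL'1 : 1 ≤ L' := Real.one_le_rpow hM1 hs0.le
  have hL'0 : 0 < L' := by linarith
  have hML' : M ≤ L' := by
    calc M = M ^ (1 : ℝ) := (Real.rpow_one _).symm
      _ ≤ M ^ s := Real.rpow_le_rpow_of_exponent_le hM1 hs1
  set ε : ℝ := M ^ (-s) / 2 with hεdef
  have hε0 : 0 < ε := by positivity
  have h2ε : 2 * ε = M ^ (-s) := by rw [hεdef]; ring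
  have h2ε1 : 2 * ε ≤ 1 := by
    rw [h2ε]
    exact Real.rpow_le_one_of_one_le_of_nonpos hM1 (by linarith)
  have h2εM : M * (2 * ε) ^ (α ^ 2) = 1 := by
    rw [h2ε, ← Real.rpow_mul hM0.le]
    have hexp : -s * α ^ 2 = -1 := by
      rw [hsdef]; field_simp
    rw [hexp, Real.rpow_neg_one]
    exact mul_inv_cancel₀ hM0.ne'
  refine ⟨Φ, Ψ, hΨΦ, hΦΨ, hΦ0, cΦ, cΨ, ⟨L', hL'1, ε, hε0, ?_⟩, hΦX, ?_⟩
  · intro p hp q hq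
    rw [mem_ball, dist_zero_right] at hp hq
    have hD1 : ‖p - q‖ ≤ 2 * ε := by
      calc ‖p - q‖ ≤ ‖p‖ + ‖q‖ := norm_sub_le _ _
        _ ≤ 2 * ε := by linarith
    have hDle1 : ‖p - q‖ ≤ 1 := hD1.trans h2ε1
    have hD0 : 0 ≤ ‖p - q‖ := norm_nonneg _
    have hupper : ‖Φ p - Φ q‖ ≤ M * ‖p - q‖ ^ (α ^ 2) := hΦup p q hDle1
    constructor
    · -- lower bound
      have hΦsmall : ‖Φ p - Φ q‖ ≤ 1 := by
        calc ‖Φ p - Φ q‖ ≤ M * ‖p - q‖ ^ (α ^ 2) := hupper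
          _ ≤ M * (2 * ε) ^ (α ^ 2) := by
            apply mul_le_mul_of_nonneg_left _ hM0.le
            exact Real.rpow_le_rpow hD0 hD1 hα2.le
          _ = 1 := h2εM
      have hback : ‖p - q‖ ≤ M * ‖Φ p - Φ q‖ ^ (α ^ 2) := by
        have := hΨup (Φ p) (Φ q) hΦsmall
        rwa [hΨΦ p, hΨΦ q] at this
      have ht0 : 0 ≤ ‖Φ p - Φ q‖ := norm_nonneg _
      have hraised : ‖p - q‖ ^ s ≤ (M * ‖Φ p - Φ q‖ ^ (α ^ 2)) ^ s :=
        Real.rpow_le_rpow hD0 hback hs0.le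
      have hrhs : (M * ‖Φ p - Φ q‖ ^ (α ^ 2)) ^ s = L' * ‖Φ p - Φ q‖ := by
      
        rw [Real.mul_rpow hM0.le (Real.rpow_nonneg ht0 _), ← Real.rpow_mul ht0]
        have : α ^ 2 * s = 1 := by rw [hsdef]; field_simp
        rw [this, Real.rpow_one, hL'def]
      rw [hrhs] at hraised
      rw [div_mul_eq_mul_div, one_mul, div_le_iff₀ hL'0]
      calc ‖p - q‖ ^ s ≤ L' * ‖Φ p - Φ q‖ := hraised
        _ = ‖Φ p - Φ q‖ * L' := mul_comm _ _
    · calc ‖Φ p - Φ q‖ ≤ M * ‖p - q‖ ^ (α ^ 2) := hupper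
        _ ≤ L' * ‖p - q‖ ^ (α ^ 2) :=
          mul_le_mul_of_nonneg_right hML' (Real.rpow_nonneg hD0 _)
  · -- image equality
    ext z
    constructor
    · rintro ⟨⟨x, v⟩, ⟨hx, hv⟩, rfl⟩
      rw [mem_singleton_iff] at hv
      subst hv
      rw [hΦX x hx]
      exact ⟨rfl, hmaps x hx⟩
    · rintro ⟨hz1, hz2⟩
      refine ⟨(g z.2, 0), ⟨hgmaps z.2 hz2, rfl⟩, ?_⟩
      rw [hΦX (g z.2) (hgmaps z.2 hz2), hhg z.2 hz2]
      rw [mem_singleton_iff] at hz1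
      exact Prod.ext hz1.symm rfl
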